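/- The map Φ_r : T*S³_r → T*ℝ³ given by Φ_r(x,y) = (r·x⃗/(r-x₀), ((r-x₀)/r)·y⃗ + (y₀/r)·x⃗) (stereographic projection from the north pole) has two-sided inverse Ψ_r(p,q) = (r(|p|²-r²)/(|p|²+r²), 2r²p/(|p|²+r²); (p·q)/r, ((|p|²+r²)/(2r²))q - ((p·q)/r²)p) on the complement of the north pole fiber. -/

import Mathlib

open Real

noncomputable section

/-- Vectors in ℝ³. -/
abbrev V3 := Fin 3 → ℝ

/-- Dot product on ℝ³. -/
def dot3 (v w : V3) : ℝ := ∑ i, v i * w i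

/-- Cross product on ℝ³. -/
def cross3 (v w : V3) : V3 :=
  ![v 1 * w 2 - v 2 * w 1, v 2 * w 0 - v 0 * w 2, v 0 * w 1 - v 1 * w 0]

/-- Euclidean norm on ℝ³. -/
def norm3 (v : V3) : ℝ := Real.sqrt (dot3 v v)

/-- Stereographic projection from the north pole of the sphere of radius r,
as a map on cotangent coordinates (x₀, x⃗; y₀, y⃗) ↦ (p, q). -/
def stereoProj (r : ℝ) (x0 : ℝ) (xv : V3) (y0 : ℝ) (yv : V3) : V3 × V3 :=
  ((r / (r - x0)) • xv, ((r - x0) / r) • yv + (y0 / r) • xv)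

/-- Inverse stereographic projection (p, q) ↦ (x₀, x⃗; y₀, y⃗). -/
def stereoInv (r : ℝ) (p q : V3) : ℝ × V3 × ℝ × V3 :=
  (r * (dot3 p p - r ^ 2) / (dot3 p p + r ^ 2),
   (2 * r ^ 2 / (dot3 p p + r ^ 2)) • p,
   dot3 p q / r,
   ((dot3 p p + r ^ 2) / (2 * r ^ 2)) • q - (dot3 p q / r ^ 2) • p)

lemma dot3_smul_left (a : ℝ) (v w : V3) : dot3 (a • v) w = a * dot3 v w := by
  simp [dot3, Fin.sum_univ_three]; ring

lemma dot3_smul_right (a : ℝ) (v w : V3) : dot3 v (a • w) = a * dot3 v w := by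
  simp [dot3, Fin.sum_univ_three]; ring

lemma dot3_add_right (v w u : V3) : dot3 v (w + u) = dot3 v w + dot3 v u := by
  simp [dot3, Fin.sum_univ_three]; ring

lemma dot3_sub_right (v w u : V3) : dot3 v (w - u) = dot3 v w - dot3 v u := by
  simp [dot3, Fin.sum_univ_three]; ring

lemma dot3_self_nonneg (v : V3) : 0 ≤ dot3 v v := by
  simp only [dot3, Fin.sum_univ_three]
  nlinarith [sq_nonneg (v 0), sq_nonneg (v 1), sq_nonneg (v 2)]

/-- The stereographic projection Φ_r and Ψ_r are two-sided inverses between the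
complement of the north pole fiber in T*S³_r and T*ℝ³. -/
theorem stereo_two_sided_inverse (r : ℝ) (hr : 0 < r) :
    (∀ (x0 : ℝ) (xv : V3) (y0 : ℝ) (yv : V3),
      x0 ^ 2 + dot3 xv xv = r ^ 2 → x0 * y0 + dot3 xv yv = 0 → x0 ≠ r →
      stereoInv r (stereoProj r x0 xv y0 yv).1 (stereoProj r x0 xv y0 yv).2
        = (x0, xv, y0, yv)) ∧
    (∀ p q : V3,
      stereoProj r (stereoInv r p q).1 (stereoInv r p q).2.1
          (stereoInv r p q).2.2.1 (stereoInv r p q).2.2.2 = (p, q) ∧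
      (stereoInv r p q).1 ^ 2 + dot3 (stereoInv r p q).2.1 (stereoInv r p q).2.1 = r ^ 2 ∧
      (stereoInv r p q).1 * (stereoInv r p q).2.2.1
          + dot3 (stereoInv r p q).2.1 (stereoInv r p q).2.2.2 = 0 ∧
      (stereoInv r p q).1 ≠ r) := by
  have hr0 : r ≠ 0 := ne_of_gt hr
  constructor
  · intro x0 xv y0 yv h1 h2 h3
    have hxlt : x0 < r := by
      have hnn := dot3_self_nonneg xv
      rcases lt_or_eq_of_le (show x0 ≤ r by nlinarith) with h | h
      · exact h
      · exact absurd h h3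
    have hrx : r - x0 ≠ 0 := by linarith
    have hxx : dot3 xv xv = r ^ 2 - x0 ^ 2 := by linarith
    have hxy : dot3 xv yv = -(x0 * y0) := by linarith
    simp only [stereoProj, stereoInv]
    have hpp : dot3 ((r / (r - x0)) • xv) ((r / (r - x0)) • xv)
        = r ^ 2 * (r + x0) / (r - x0) := by
      rw [dot3_smul_left, dot3_smul_right, hxx]
      field_simp
      ring
    have hpq : dot3 ((r / (r - x0)) • xv) (((r - x0) / r) • yv + (y0 / r) • xv)
        = r * y0 := by
      rw [dot3_add_right, dot3_smul_right, dot3_smul_right, dot3_smul_left,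
        dot3_smul_left, hxx, hxy]
      field_simp
      ring
    have hD : r ^ 2 * (r + x0) / (r - x0) + r ^ 2 = 2 * r ^ 3 / (r - x0) := by
      field_simp
      ring
    have hN : r ^ 2 * (r + x0) / (r - x0) - r ^ 2 = 2 * r ^ 2 * x0 / (r - x0) := by
      field_simp
      ring
    rw [hpp, hpq, hD, hN]
    refine Prod.ext ?_ (Prod.ext ?_ (Prod.ext ?_ ?_))
    · show r * (2 * r ^ 2 * x0 / (r - x0)) / (2 * r ^ 3 / (r - x0)) = x0
      field_simp
    · show (2 * r ^ 2 / (2 * r ^ 3 / (r - x0))) • ((r / (r - x0)) • xv) = xv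
      rw [smul_smul]
      have : 2 * r ^ 2 / (2 * r ^ 3 / (r - x0)) * (r / (r - x0)) = 1 := by
        field_simp
      rw [this, one_smul]
    · show r * y0 / r = y0
      field_simp
    · show (2 * r ^ 3 / (r - x0) / (2 * r ^ 2)) • (((r - x0) / r) • yv + (y0 / r) • xv)
          - (r * y0 / r ^ 2) • ((r / (r - x0)) • xv) = yv
      funext i
      simp only [Pi.sub_apply, Pi.add_apply, Pi.smul_apply, smul_eq_mul]
      field_simp
      ring
  · intro p q
    set s := dot3 p p with hs
    set t := dot3 p q with ht
    have hs0 : 0 ≤ s := dot3_self_nonneg p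
    have hDpos : 0 < s + r ^ 2 := by positivity
    have hD : s + r ^ 2 ≠ 0 := ne_of_gt hDpos
    have hx0r : r * (s - r ^ 2) / (s + r ^ 2) ≠ r := by
      rw [Ne, div_eq_iff hD]
      intro h
      have h2 := mul_left_cancel₀ hr0 h
      nlinarith [sq_nonneg r, hr]
    have hrx : r - r * (s - r ^ 2) / (s + r ^ 2) = 2 * r ^ 3 / (s + r ^ 2) := by
      field_simp
      ring
    refine ⟨?_, ?_, ?_, ?_⟩
    · simp only [stereoProj, stereoInv, ← hs, ← ht]
      rw [hrx]
      refine Prod.ext ?_ ?_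
      · show (r / (2 * r ^ 3 / (s + r ^ 2))) • ((2 * r ^ 2 / (s + r ^ 2)) • p) = p
        rw [smul_smul]
        have : r / (2 * r ^ 3 / (s + r ^ 2)) * (2 * r ^ 2 / (s + r ^ 2)) = 1 := by
          rw [div_div_eq_mul_div]
          field_simp
        rw [this, one_smul]
      · show (2 * r ^ 3 / (s + r ^ 2) / r) •
            (((s + r ^ 2) / (2 * r ^ 2)) • q - (t / r ^ 2) • p)
            + (t / r / r) • ((2 * r ^ 2 / (s + r ^ 2)) • p) = q
        funext i
        simp only [Pi.add_apply, Pi.sub_apply, Pi.smul_apply, smul_eq_mul]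
        field_simp
        ring
    · simp only [stereoInv, ← hs]
      rw [dot3_smul_left, dot3_smul_right, ← hs]
      field_simp
      ring
    · simp only [stereoInv, ← hs, ← ht]
      rw [dot3_smul_left, dot3_sub_right, dot3_smul_right, dot3_smul_right,
        ← hs, ← ht]
      field_simp
      ring
    · simpa only [stereoInv, ← hs] using hx0r
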